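/- The formal power series g(z) = Σ_{n≥0} b_n z^n satisfies the differential equation z^2(1+z^q) g'(z) - (1+z^q)(1 - z - (q-1)z^q) g(z) + 1 - (q-1)z^q = 0. -/

import Mathlib

open Finset

/-- `a` with `a+1`, ..., `a+q-1` (0-indexed) form an adjacent `q`-cycle of `π`. -/
def isAdjCycle (q : ℕ) {n : ℕ} (π : Equiv.Perm (Fin n)) (a : ℕ) : Prop :=
  a + q ≤ n ∧ ∀ i : Fin n, a ≤ i.val → i.val < a + q →
    (π i).val = if i.val = a + q - 1 then a else i.val + 1

instance (q n : ℕ) (π : Equiv.Perm (Fin n)) (a : ℕ) : Decidable (isAdjCycle q π a) := by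
  unfold isAdjCycle; infer_instance

/-- The number of adjacent `q`-cycles of a permutation of `{1,...,n}`. -/
def adjCycleCount (q : ℕ) {n : ℕ} (π : Equiv.Perm (Fin n)) : ℕ :=
  ((Finset.range n).filter (isAdjCycle q π)).card

/-- `numAqC q n k` = number of permutations of `{1,...,n}` with exactly `k` adjacent `q`-cycles. -/
def numAqC (q n k : ℕ) : ℕ :=
  (Finset.univ.filter (fun π : Equiv.Perm (Fin n) => adjCycleCount q π = k)).card

def b (q n : ℕ) : ℕ := numAqC q n 0

section Comb
open Classical
variable (q n : ℕ) (S : Finset ℕ)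

def Cov (i : ℕ) : Prop := ∃ a ∈ S, a ≤ i ∧ i < a + q

def SValid : Prop := (∀ a ∈ S, a + q ≤ n) ∧ ∀ a ∈ S, ∀ c ∈ S, a < c → a + q ≤ c

noncomputable def Ff (i : ℕ) : ℕ :=
  if h : Cov q S i then
    (if i = h.choose + q - 1 then h.choose else i + 1)
  else i

noncomputable def Gg (i : ℕ) : ℕ :=
  if h : Cov q S i then
    (if i = h.choose then h.choose + q - 1 else i - 1)
  else i

variable {q n S}

theorem cov_unique (hv : SValid q n S) {a c i : ℕ} (ha : a ∈ S) (hc : c ∈ S)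
    (h1 : a ≤ i) (h2 : i < a + q) (h3 : c ≤ i) (h4 : i < c + q) : a = c := by
  rcases lt_trichotomy a c with h | h | h
  · exact absurd (hv.2 a ha c hc h) (by omega)
  · exact h
  · exact absurd (hv.2 c hc a ha h) (by omega)

theorem choose_eq (hv : SValid q n S) {a i : ℕ} (ha : a ∈ S) (h1 : a ≤ i) (h2 : i < a + q)
    (h : Cov q S i) : h.choose = a := by
  obtain ⟨hm, hle, hlt⟩ := h.choose_spec
  exact cov_unique hv hm ha hle hlt h1 h2

theorem Ff_spec (hv : SValid q n S) {a i : ℕ} (ha : a ∈ S) (h1 : a ≤ i) (h2 : i < a + q) :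
    Ff q S i = if i = a + q - 1 then a else i + 1 := by
  have h : Cov q S i := ⟨a, ha, h1, h2⟩
  rw [Ff, dif_pos h, choose_eq hv ha h1 h2 h]

theorem Gg_spec (hv : SValid q n S) {a i : ℕ} (ha : a ∈ S) (h1 : a ≤ i) (h2 : i < a + q) :
    Gg q S i = if i = a then a + q - 1 else i - 1 := by
  have h : Cov q S i := ⟨a, ha, h1, h2⟩
  rw [Gg, dif_pos h, choose_eq hv ha h1 h2 h]

theorem Ff_not (h : ¬ Cov q S i) : Ff q S i = i := dif_neg h
theorem Gg_not (h : ¬ Cov q S i) : Gg q S i = i := dif_neg h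

theorem Gg_Ff (hq : 1 ≤ q) (hv : SValid q n S) (i : ℕ) : Gg q S (Ff q S i) = i := by
  by_cases h : Cov q S i
  · obtain ⟨a, ha, h1, h2⟩ := h
    rw [Ff_spec hv ha h1 h2]
    by_cases he : i = a + q - 1
    · rw [if_pos he, Gg_spec hv ha (le_refl a) (by omega), if_pos rfl]; omega
    · rw [if_neg he, Gg_spec hv ha (by omega) (by omega), if_neg (by omega)]; omega
  · rw [Ff_not h, Gg_not h]

theorem Ff_Gg (hq : 1 ≤ q) (hv : SValid q n S) (i : ℕ) : Ff q S (Gg q S i) = i := by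
  by_cases h : Cov q S i
  · obtain ⟨a, ha, h1, h2⟩ := h
    rw [Gg_spec hv ha h1 h2]
    by_cases he : i = a
    · rw [if_pos he, Ff_spec hv ha (by omega) (by omega), if_pos rfl]; omega
    · rw [if_neg he, Ff_spec hv ha (by omega) (by omega), if_neg (by omega)]; omega
  · rw [Gg_not h, Ff_not h]

theorem Ff_lt (hv : SValid q n S) {i : ℕ} (hi : i < n) : Ff q S i < n := by
  by_cases h : Cov q S i
  · obtain ⟨a, ha, h1, h2⟩ := h
    have := hv.1 a ha
    rw [Ff_spec hv ha h1 h2]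
    split <;> omega
  · rwa [Ff_not h]

theorem Gg_lt (hv : SValid q n S) {i : ℕ} (hi : i < n) : Gg q S i < n := by
  by_cases h : Cov q S i
  · obtain ⟨a, ha, h1, h2⟩ := h
    have := hv.1 a ha
    rw [Gg_spec hv ha h1 h2]
    split <;> omega
  · rwa [Gg_not h]

/-- The permutation acting as the prescribed cycles on the blocks of `S`. -/
noncomputable def sigmaPerm (hq : 1 ≤ q) (hv : SValid q n S) : Equiv.Perm (Fin n) where
  toFun i := ⟨Ff q S i.val, Ff_lt hv i.isLt⟩
  invFun i := ⟨Gg q S i.val, Gg_lt hv i.isLt⟩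
  left_inv i := by ext; exact Gg_Ff hq hv i.val
  right_inv i := by ext; exact Ff_Gg hq hv i.val

end Comb

section Count
open Classical
variable {q n : ℕ} {S : Finset ℕ}

theorem adj_iff_sigma (hq : 1 ≤ q) (hv : SValid q n S) (π : Equiv.Perm (Fin n)) :
    (∀ a ∈ S, isAdjCycle q π a) ↔ (∀ i : Fin n, Cov q S i.val → π i = sigmaPerm hq hv i) := by
  constructor
  · rintro h i ⟨a, ha, h1, h2⟩
    have := (h a ha).2 i h1 h2
    apply Fin.ext
    rw [this]
    show _ = Ff q S i.val
    rw [Ff_spec hv ha h1 h2]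
  · intro h a ha
    refine ⟨hv.1 a ha, fun i h1 h2 => ?_⟩
    rw [h i ⟨a, ha, h1, h2⟩]
    show Ff q S i.val = _
    rw [Ff_spec hv ha h1 h2]

theorem card_fixing (hq : 1 ≤ q) (hv : SValid q n S) :
    Fintype.card {π : Equiv.Perm (Fin n) // ∀ a ∈ S, isAdjCycle q π a}
      = Nat.factorial (n - q * S.card) := by
  classical
  set σ := sigmaPerm hq hv with hσ
  have e1 : {π : Equiv.Perm (Fin n) // ∀ a ∈ S, isAdjCycle q π a} ≃
      {ρ : Equiv.Perm (Fin n) // ∀ i : Fin n, Cov q S i.val → ρ i = i} := by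
    refine (Equiv.subtypeEquiv (Equiv.mulLeft σ⁻¹) fun π => ?_)
    rw [adj_iff_sigma hq hv]
    constructor
    · intro h i hi
      simp only [Equiv.coe_mulLeft, Equiv.Perm.mul_apply, h i hi]
      exact σ.symm_apply_apply i
    · intro h i hi
      have h2 := h i hi
      simp only [Equiv.coe_mulLeft, Equiv.Perm.mul_apply] at h2
      have h3 := congrArg σ h2
      simpa using h3
  have e2 : {ρ : Equiv.Perm (Fin n) // ∀ i : Fin n, Cov q S i.val → ρ i = i} ≃
      Equiv.Perm {i : Fin n // ¬ Cov q S i.val} := by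
    refine Equiv.trans ?_ (Equiv.Perm.subtypeEquivSubtypePerm (fun i : Fin n => ¬ Cov q S i.val)).symm
    refine Equiv.subtypeEquivRight fun ρ => ?_
    constructor
    · intro h i hi
      exact h i (not_not.mp hi)
    · intro h i hi
      exact h i (not_not.mpr hi)
  rw [Fintype.card_congr (e1.trans e2), Fintype.card_perm]
  congr 1
  have hcov : Fintype.card {i : Fin n // Cov q S i.val} = q * S.card := by
    have e3 : {i : Fin n // Cov q S i.val} ≃
        (S.biUnion (fun a => Finset.Ico a (a + q)) : Finset ℕ) := by
      refine ⟨fun x => ⟨x.1.val, ?_⟩, fun x => ⟨⟨x.1, ?_⟩, ?_⟩, ?_, ?_⟩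
      · obtain ⟨a, ha, h1, h2⟩ := x.2
        exact Finset.mem_biUnion.mpr ⟨a, ha, Finset.mem_Ico.mpr ⟨h1, h2⟩⟩
      · obtain ⟨a, ha, hx⟩ := Finset.mem_biUnion.mp x.2
        rw [Finset.mem_Ico] at hx
        have := hv.1 a ha
        omega
      · obtain ⟨a, ha, hx⟩ := Finset.mem_biUnion.mp x.2
        rw [Finset.mem_Ico] at hx
        exact ⟨a, ha, hx.1, hx.2⟩
      · intro x; rfl
      · intro x; rfl
    rw [Fintype.card_congr e3, Fintype.card_coe]
    rw [Finset.card_biUnion]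
    · rw [Finset.sum_congr rfl (fun a _ => Nat.card_Ico a (a + q)),
        Finset.sum_congr rfl (fun a _ => by omega : ∀ a ∈ S, a + q - a = q),
        Finset.sum_const, smul_eq_mul, mul_comm]
    · intro a ha c hc hac
      rw [Function.onFun, Finset.disjoint_left]
      intro x hx1 hx2
      rw [Finset.mem_Ico] at hx1 hx2
      exact hac (cov_unique hv ha hc hx1.1 hx1.2 hx2.1 hx2.2)
  have := Fintype.card_subtype_compl (fun i : Fin n => Cov q S i.val)
  rw [this, hcov, Fintype.card_fin]

theorem card_fixing_filter (hq : 1 ≤ q) (hv : SValid q n S) :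
    ((Finset.univ.filter (fun π : Equiv.Perm (Fin n) => ∀ a ∈ S, isAdjCycle q π a)).card)
      = Nat.factorial (n - q * S.card) := by
  rw [← card_fixing hq hv, Fintype.card_subtype]

theorem card_fixing_zero (hq : 1 ≤ q) (hv : ¬ SValid q n S) :
    ((Finset.univ.filter (fun π : Equiv.Perm (Fin n) => ∀ a ∈ S, isAdjCycle q π a)).card)
      = 0 := by
  rw [Finset.card_eq_zero, Finset.filter_eq_empty_iff]
  intro π _
  intro h
  apply hv
  constructor
  · exact fun a ha => (h a ha).1
  · intro a ha c hc hac
    by_contra hlt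
    have hin : a + q ≤ n := (h a ha).1
    have hi : a + q - 1 < n := by omega
    have h1 := (h a ha).2 ⟨a + q - 1, hi⟩ (by simp; omega) (by simp; omega)
    have h2 := (h c hc).2 ⟨a + q - 1, hi⟩ (by simp; omega) (by simp; omega)
    simp only [Fin.val_mk] at h1 h2
    rw [if_neg (by omega : ¬ (a + q - 1 = c + q - 1))] at h2
    simp at h1
    omega
end Count

section Valid
open Classical
variable {q : ℕ}

theorem card_valid (hq : 1 ≤ q) : ∀ (n j : ℕ),
    ((Finset.powersetCard j (Finset.range n)).filter (SValid q n)).card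
      = Nat.choose (n - j * (q - 1)) j := by
  intro n
  induction n using Nat.strong_induction_on with
  | _ n ih =>
  intro j
  match n, j with
  | n, 0 =>
    rw [Finset.powersetCard_zero]
    rw [Finset.filter_singleton, if_pos]
    · simp
    · exact ⟨fun a ha => absurd ha (Finset.notMem_empty a),
        fun a ha => absurd ha (Finset.notMem_empty a)⟩
  | 0, (j+1) =>
    rw [Finset.range_zero, Finset.powersetCard_eq_empty.mpr (by simp),
      Finset.filter_empty, Finset.card_empty,
      Nat.choose_eq_zero_of_lt (by omega : 0 - (j+1)*(q-1) < j + 1)]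
  | (n+1), (j+1) =>
    by_cases hqn : q ≤ n + 1
    · -- main case
      set m := n + 1 - q with hm
      set A := (Finset.powersetCard (j+1) (Finset.range (n+1))).filter (SValid q (n+1)) with hA
      have hsplit : (A.filter (fun S => m ∈ S)).card + (A.filter (fun S => m ∉ S)).card
          = A.card :=
        Finset.card_filter_add_card_filter_not (fun S => m ∈ S)
      have hA0 : A.filter (fun S => ¬ m ∈ S)
          = (Finset.powersetCard (j+1) (Finset.range n)).filter (SValid q n) := by
        ext S
        simp only [Finset.mem_filter, hA, Finset.mem_powersetCard]
        constructor
        · rintro ⟨⟨⟨hsub, hcard⟩, hval⟩, hmem⟩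
          have hsub' : S ⊆ Finset.range n := by
            intro a ha
            have h1 := hval.1 a ha
            have h2 : a ≠ m := fun h => hmem (h ▸ ha)
            rw [Finset.mem_range]; omega
          refine ⟨⟨hsub', hcard⟩, ⟨fun a ha => ?_, hval.2⟩⟩
          have h1 := hval.1 a ha
          have h2 : a ≠ m := fun h => hmem (h ▸ ha)
          omega
        · rintro ⟨⟨hsub, hcard⟩, hval⟩
          refine ⟨⟨⟨fun a ha => ?_, hcard⟩,
            ⟨fun a ha => ?_, hval.2⟩⟩, fun hmem => ?_⟩
          · have := hsub ha; rw [Finset.mem_range] at *; omega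
          · have := hval.1 a ha; omega
          · have := hval.1 m hmem; omega
      have hA1 : (A.filter (fun S => m ∈ S)).card
          = ((Finset.powersetCard j (Finset.range m)).filter (SValid q m)).card := by
        refine Finset.card_bij' (fun S _ => S.erase m) (fun T _ => insert m T) ?_ ?_ ?_ ?_
        · intro S hS
          simp only [Finset.mem_filter, hA, Finset.mem_powersetCard] at hS
          obtain ⟨⟨⟨hsub, hcard⟩, hval⟩, hmem⟩ := hS
          have key : ∀ a ∈ S, a ≠ m → a + q ≤ m := by
            intro a ha hne
            have hb := hval.1 a ha
            rcases lt_trichotomy a m with h | h | h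
            · exact hval.2 a ha m hmem h
            · exact absurd h hne
            · have := hval.2 m hmem a ha h; omega
          simp only [Finset.mem_filter, Finset.mem_powersetCard]
          refine ⟨⟨fun a ha => ?_, ?_⟩, ⟨fun a ha => ?_, fun a ha c hc hlt => ?_⟩⟩
          · rw [Finset.mem_erase] at ha
            rw [Finset.mem_range]
            have := key a ha.2 ha.1; omega
          · rw [Finset.card_erase_of_mem hmem, hcard]
            omega
          · rw [Finset.mem_erase] at ha
            exact key a ha.2 ha.1
          · rw [Finset.mem_erase] at ha hc
            exact hval.2 a ha.2 c hc.2 hlt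
        · intro T hT
          simp only [Finset.mem_filter, Finset.mem_powersetCard] at hT
          obtain ⟨⟨hsub, hcard⟩, hval⟩ := hT
          have hnm : m ∉ T := fun h => by have := hsub h; rw [Finset.mem_range] at this; omega
          simp only [Finset.mem_filter, hA, Finset.mem_powersetCard]
          refine ⟨⟨⟨fun a ha => ?_, ?_⟩, ⟨fun a ha => ?_, fun a ha c hc hlt => ?_⟩⟩,
            Finset.mem_insert_self m T⟩
          · rw [Finset.mem_insert] at ha
            rw [Finset.mem_range]
            rcases ha with rfl | ha
            · omega
            · have := hval.1 a ha; omega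
          · rw [Finset.card_insert_of_notMem hnm, hcard]
          · rw [Finset.mem_insert] at ha
            rcases ha with rfl | ha
            · omega
            · have := hval.1 a ha; omega
          · rw [Finset.mem_insert] at ha hc
            rcases ha with rfl | ha <;> rcases hc with rfl | hc
            · omega
            · have := hval.1 c hc; have := hsub hc; rw [Finset.mem_range] at this; omega
            · have := hsub ha; rw [Finset.mem_range] at this
              have := hval.1 a ha; omega
            · exact hval.2 a ha c hc hlt
        · intro S hS
          simp only [Finset.mem_filter, hA] at hS
          exact Finset.insert_erase hS.2
        · intro T hT
          simp only [Finset.mem_filter, Finset.mem_powersetCard] at hT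
          have hnm : m ∉ T := fun h => by
            have := hT.1.1 h; rw [Finset.mem_range] at this; omega
          exact Finset.erase_insert hnm
      have hm_lt : m < n + 1 := by omega
      rw [← hsplit, Nat.add_comm, hA0, hA1, ih n (by omega) (j+1), ih m hm_lt j]
      -- arithmetic with choose
      have hK : (j+1) * (q-1) = j * (q-1) + (q-1) := by rw [Nat.succ_mul]
      set P := j * (q - 1) with hP
      have harg : m - P = n - (j+1)*(q-1) := by omega
      rw [harg]
      rcases le_or_gt ((j+1)*(q-1)) n with h | h
      · have : n + 1 - (j+1)*(q-1) = (n - (j+1)*(q-1)) + 1 := by omega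
        rw [this, Nat.choose_succ_succ']
        omega
      · have h1 : n + 1 - (j+1)*(q-1) ≤ j + 1 := by omega
        have hj1 : 1 ≤ j := by
          by_contra hj
          have hj0 : j = 0 := by omega
          subst hj0
          have : (0+1)*(q-1) = q - 1 := by ring
          omega
        have h2 : n - (j+1)*(q-1) = 0 := by omega
        rw [h2]
        have h3 : n + 1 - (j+1)*(q-1) < j + 1 := by
          rcases Nat.lt_or_ge (n+1) ((j+1)*(q-1)) with hh | hh
          · omega
          · -- n+1 = (j+1)(q-1) possible; then n+1-K = 0 < j+1
            omega
        rw [Nat.choose_eq_zero_of_lt h3, Nat.choose_eq_zero_of_lt (by omega),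
          Nat.choose_eq_zero_of_lt (by omega)]
    · -- q > n+1 : no valid sets
      have hempty : ((Finset.powersetCard (j+1) (Finset.range (n+1))).filter
          (SValid q (n+1))) = ∅ := by
        rw [Finset.filter_eq_empty_iff]
        intro S hS
        rw [Finset.mem_powersetCard] at hS
        intro hval
        have : S.Nonempty := by
          rw [← Finset.card_pos, hS.2]; omega
        obtain ⟨a, ha⟩ := this
        have := hval.1 a ha
        omega
      rw [hempty]
      have : (j+1)*(q-1) ≥ (q-1) := by nlinarith
      have : n + 1 - (j+1)*(q-1) < j + 1 := by omega
      rw [Nat.choose_eq_zero_of_lt this]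
      simp
end Valid

section IE
open Classical

theorem b_closed (q : ℕ) (hq : 1 ≤ q) (n : ℕ) :
    (b q n : ℤ) = ∑ j ∈ Finset.range (n+1),
      (-1)^j * (Nat.choose (n - j*(q-1)) j : ℤ) * (Nat.factorial (n - j*q) : ℤ) := by
  classical
  have h0 : b q n = (Finset.univ.filter (fun π : Equiv.Perm (Fin n) =>
      ((Finset.range n).filter (isAdjCycle q π)) = ∅)).card := by
    rw [b, numAqC]
    congr 1
    ext π
    simp [adjCycleCount, Finset.card_eq_zero]
  have step1 : (b q n : ℤ) = ∑ π : Equiv.Perm (Fin n),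
      (if ((Finset.range n).filter (isAdjCycle q π)) = ∅ then (1:ℤ) else 0) := by
    rw [h0, Finset.card_filter]
    push_cast
    rfl
  have step2 : ∀ π : Equiv.Perm (Fin n),
      (if ((Finset.range n).filter (isAdjCycle q π)) = ∅ then (1:ℤ) else 0)
      = ∑ S ∈ (Finset.range n).powerset,
          (if (∀ a ∈ S, isAdjCycle q π a) then (-1:ℤ)^S.card else 0) := by
    intro π
    rw [← Finset.sum_powerset_neg_one_pow_card (x := (Finset.range n).filter (isAdjCycle q π))]
    rw [Finset.sum_ite, Finset.sum_const_zero, add_zero]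
    refine (Finset.sum_congr ?_ fun _ _ => rfl).symm
    ext S
    simp only [Finset.mem_filter, Finset.mem_powerset]
    constructor
    · rintro ⟨hsub, hall⟩
      intro x hx
      exact Finset.mem_filter.mpr ⟨hsub hx, hall x hx⟩
    · intro hsub
      constructor
      · exact fun x hx => (Finset.mem_filter.mp (hsub hx)).1
      · exact fun x hx => (Finset.mem_filter.mp (hsub hx)).2
  rw [step1]
  rw [Finset.sum_congr rfl (fun π _ => step2 π), Finset.sum_comm]
  have step3 : ∀ S ∈ (Finset.range n).powerset,
      (∑ π : Equiv.Perm (Fin n), if (∀ a ∈ S, isAdjCycle q π a) then (-1:ℤ)^S.card else 0)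
      = (-1:ℤ)^S.card * (if SValid q n S then (Nat.factorial (n - q * S.card) : ℤ) else 0) := by
    intro S _
    rw [Finset.sum_ite, Finset.sum_const_zero, add_zero, Finset.sum_const,
      nsmul_eq_mul, mul_comm]
    congr 1
    by_cases hv : SValid q n S
    · rw [if_pos hv, card_fixing_filter hq hv]
    · rw [if_neg hv, card_fixing_zero hq hv]
      rfl
  rw [Finset.sum_congr rfl step3]
  rw [Finset.powerset_card_disjiUnion]; erw [Finset.sum_disjiUnion]; rw [Finset.card_range]
  refine Finset.sum_congr rfl fun j hj => ?_
  have hinner : ∀ S ∈ Finset.powersetCard j (Finset.range n),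
      (-1:ℤ)^S.card * (if SValid q n S then (Nat.factorial (n - q * S.card) : ℤ) else 0)
      = (if SValid q n S then (1:ℤ) else 0) * ((-1:ℤ)^j * (Nat.factorial (n - j * q) : ℤ)) := by
    intro S hS
    have hcard : S.card = j := (Finset.mem_powersetCard.mp hS).2
    rw [hcard, mul_comm q j]
    by_cases hv : SValid q n S
    · rw [if_pos hv, if_pos hv, one_mul]
    · rw [if_neg hv, if_neg hv, mul_zero, zero_mul]
  rw [Finset.sum_congr rfl hinner, ← Finset.sum_mul, Finset.sum_boole]
  rw [card_valid hq n j]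
  push_cast
  ring

end IE

section Rec
open Finset

/-- term of the closed form -/
def cc (q n j : ℕ) : ℚ :=
  (-1)^j * (Nat.choose (n - j*(q-1)) j : ℚ) * (Nat.factorial (n - j*q) : ℚ)

variable {q : ℕ}

theorem czero (hq : 1 ≤ q) {n j : ℕ} (h1 : 1 ≤ j) (h2 : n < j * q) : cc q n j = 0 := by
  have e1 : j * (q-1) + j = j * q := by
    conv_rhs => rw [show q = (q-1)+1 by omega]
    ring
  have : n - j*(q-1) < j := by omega
  rw [cc, Nat.choose_eq_zero_of_lt this]
  push_cast
  ring

theorem b_closed_q (hq : 1 ≤ q) (n : ℕ) :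
    (b q n : ℚ) = ∑ j ∈ Finset.range (n+1), cc q n j := by
  have := b_closed q hq n
  have h2 : ((b q n : ℤ) : ℚ) = _ := congrArg (fun z : ℤ => (z : ℚ)) this
  push_cast at h2
  rw [h2]
  exact Finset.sum_congr rfl fun j _ => by rw [cc]

/-- extend the closed form sum to any big enough range -/
theorem b_closed_ext (hq : 1 ≤ q) (n M : ℕ) (hM : n + 1 ≤ M) :
    (b q n : ℚ) = ∑ j ∈ Finset.range M, cc q n j := by
  rw [b_closed_q hq n]
  refine Finset.sum_subset (Finset.range_subset_range.mpr hM) fun j _ hj => ?_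
  rw [Finset.mem_range, not_lt] at hj
  refine czero hq (by omega) ?_
  calc n < j := by omega
    _ = j * 1 := (mul_one j).symm
    _ ≤ j * q := Nat.mul_le_mul_left j hq
end Rec

section Perj
variable {q : ℕ}

theorem cc_eval (q n j A B : ℕ) (hA : n - j*(q-1) = A) (hB : n - j*q = B) :
    cc q n j = (-1)^j * (Nat.choose A j : ℚ) * (Nat.factorial B : ℚ) := by
  rw [cc, hA, hB]

theorem mul_pred (k : ℕ) (hq : 1 ≤ q) : k * (q-1) + k = k * q := by
  obtain ⟨p, rfl⟩ : ∃ p, q = p + 1 := ⟨q-1, by omega⟩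
  simp only [Nat.add_sub_cancel, Nat.mul_succ]

/-- per-index difference -/
def tD (q n j : ℕ) : ℚ :=
  cc q n j - (n:ℚ) * cc q (n-1) j
    - (if q ≤ n ∧ 1 ≤ j then ((q:ℚ)-2) * cc q (n-q) (j-1) else 0)
    - (if q+1 ≤ n ∧ 1 ≤ j then ((n:ℚ)-(q:ℚ)) * cc q (n-q-1) (j-1) else 0)
    - (if 2*q ≤ n ∧ 2 ≤ j then ((q:ℚ)-1) * cc q (n-2*q) (j-2) else 0)

theorem perj (hq : 1 ≤ q) (n j : ℕ) : tD q n j =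
    (if n = 0 ∧ j = 0 then 1 else 0) - (if n = q ∧ j = 1 then ((q:ℚ)-1) else 0) := by
  rcases Nat.eq_zero_or_pos j with rfl | hj
  · -- j = 0
    rw [tD, if_neg (by omega), if_neg (by omega), if_neg (by omega)]
    rw [cc_eval q n 0 n n (by omega) (by omega),
      cc_eval q (n-1) 0 (n-1) (n-1) (by omega) (by omega)]
    simp only [Nat.choose_zero_right]
    rcases Nat.eq_zero_or_pos n with rfl | hn
    · rw [if_pos (by simp), if_neg (by omega)]
      norm_num [Nat.factorial_zero]
    · rw [if_neg (by omega), if_neg (by omega)]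
      have hmf : ((n:ℚ)) * (Nat.factorial (n-1) : ℚ) = (Nat.factorial n : ℚ) := by
        exact_mod_cast Nat.mul_factorial_pred hn.ne'
      push_cast at hmf ⊢
      linear_combination -hmf
  · by_cases hle : j * q ≤ n
    · -- main case: n = m + j*q
      set m := n - j*q with hm
      have hn : n = m + j*q := by omega
      rcases Nat.lt_or_ge j 2 with hj1 | hj2
      · -- j = 1
        obtain rfl : j = 1 := by omega
        rw [one_mul] at hn hle
        rcases Nat.eq_zero_or_pos m with hm0 | hm1
        · -- j = 1, m = 0 : n = q
          have hnq : n = q := by omega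
          rw [tD, if_pos (by omega), if_neg (by omega), if_neg (by omega)]
          rw [show (1:ℕ) - 1 = 0 from rfl]
          rw [cc_eval q n 1 1 0 (by omega) (by omega),
            cc_eval q (n-1) 1 0 0 (by omega) (by omega),
            cc_eval q (n-q) 0 0 0 (by omega) (by omega)]
          rw [if_neg (by omega), if_pos (by omega)]
          rw [Nat.choose_self, Nat.choose_eq_zero_of_lt (by omega), Nat.choose_zero_right,
            Nat.factorial_zero]
          push_cast
          ring
        · -- j = 1, m ≥ 1
          obtain ⟨mm, hmm⟩ : ∃ mm, m = mm + 1 := ⟨m - 1, by omega⟩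
          rw [tD, if_pos (by omega), if_pos (by omega), if_neg (by omega)]
          rw [show (1:ℕ) - 1 = 0 from rfl]
          rw [cc_eval q n 1 (m+1) m (by omega) (by omega),
            cc_eval q (n-1) 1 m (m-1) (by omega) (by omega),
            cc_eval q (n-q) 0 m m (by omega) (by omega),
            cc_eval q (n-q-1) 0 (m-1) (m-1) (by omega) (by omega)]
          rw [if_neg (by omega), if_neg (by omega)]
          rw [Nat.choose_one_right, Nat.choose_one_right, Nat.choose_zero_right,
            Nat.choose_zero_right]
          rw [hmm, show mm + 1 - 1 = mm from rfl,
            show Nat.factorial (mm+1) = (mm+1) * Nat.factorial mm from Nat.factorial_succ mm]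
          have hnval : (n:ℚ) = (mm:ℚ) + 1 + (q:ℚ) := by
            have : n = mm + 1 + q := by omega
            rw [this]; push_cast; ring
          rw [hnval]
          push_cast
          ring
      · -- j ≥ 2
        obtain ⟨kk, rfl⟩ : ∃ kk, j = kk + 2 := ⟨j - 2, by omega⟩
        have eA : kk*(q-1) + kk = kk*q := mul_pred kk hq
        have eB : (kk+1)*q = kk*q + q := by ring
        have eC : (kk+2)*q = kk*q + 2*q := by ring
        have eD : (kk+1)*(q-1) = kk*(q-1) + (q-1) := by ring
        have eE : (kk+2)*(q-1) = kk*(q-1) + 2*(q-1) := by ring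
        rw [tD, if_pos (by omega), if_pos (by omega), if_pos (by omega)]
        rw [show kk + 2 - 1 = kk + 1 from rfl, show kk + 2 - 2 = kk from rfl]
        rcases Nat.eq_zero_or_pos m with hm0 | hm1
        · -- m = 0, j ≥ 2 : n = j*q
          rw [cc_eval q n (kk+2) (kk+2) 0 (by omega) (by omega),
            cc_eval q (n-1) (kk+2) (kk+1) 0 (by omega) (by omega),
            cc_eval q (n-q) (kk+1) (kk+1) 0 (by omega) (by omega),
            cc_eval q (n-q-1) (kk+1) kk 0 (by omega) (by omega),
            cc_eval q (n-2*q) kk kk 0 (by omega) (by omega)]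
          rw [if_neg (by omega), if_neg (by omega)]
          rw [Nat.choose_self, Nat.choose_self, Nat.choose_self,
            Nat.choose_eq_zero_of_lt (by omega), Nat.choose_eq_zero_of_lt (by omega),
            Nat.factorial_zero]
          push_cast
          ring
        · -- m ≥ 1, j ≥ 2 : generic case
          obtain ⟨mm, hmm⟩ : ∃ mm, m = mm + 1 := ⟨m - 1, by omega⟩
          rw [cc_eval q n (kk+2) (mm+kk+3) (mm+1) (by omega) (by omega),
            cc_eval q (n-1) (kk+2) (mm+kk+2) mm (by omega) (by omega),
            cc_eval q (n-q) (kk+1) (mm+kk+2) (mm+1) (by omega) (by omega),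
            cc_eval q (n-q-1) (kk+1) (mm+kk+1) mm (by omega) (by omega),
            cc_eval q (n-2*q) kk (mm+kk+1) (mm+1) (by omega) (by omega)]
          rw [if_neg (by omega), if_neg (by omega)]
          have R1 : Nat.choose (mm+kk+3) (kk+2)
              = Nat.choose (mm+kk+2) (kk+1) + Nat.choose (mm+kk+2) (kk+2) :=
            Nat.choose_succ_succ (mm+kk+2) (kk+1)
          have R2 : Nat.choose (mm+kk+2) (kk+1)
              = Nat.choose (mm+kk+1) kk + Nat.choose (mm+kk+1) (kk+1) :=
            Nat.choose_succ_succ (mm+kk+1) kk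
          have R3 : (mm+kk+2) * Nat.choose (mm+kk+1) (kk+1)
              = Nat.choose (mm+kk+2) (kk+2) * (kk+2) :=
            Nat.add_one_mul_choose_eq (mm+kk+1) (kk+1)
          have R1' : (Nat.choose (mm+kk+3) (kk+2) : ℚ)
              = Nat.choose (mm+kk+2) (kk+1) + Nat.choose (mm+kk+2) (kk+2) := by
            exact_mod_cast R1
          have R2' : (Nat.choose (mm+kk+2) (kk+1) : ℚ)
              = Nat.choose (mm+kk+1) kk + Nat.choose (mm+kk+1) (kk+1) := by
            exact_mod_cast R2
          have R3' : ((mm:ℚ)+(kk:ℚ)+2) * (Nat.choose (mm+kk+1) (kk+1) : ℚ)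
              = (Nat.choose (mm+kk+2) (kk+2) : ℚ) * ((kk:ℚ)+2) := by
            exact_mod_cast R3
          have hfact' : (Nat.factorial (mm+1) : ℚ) = ((mm:ℚ)+1) * Nat.factorial mm := by
            exact_mod_cast Nat.factorial_succ mm
          have hnval : (n:ℚ) = (mm:ℚ) + 1 + ((kk:ℚ)+2) * (q:ℚ) := by
            have : n = mm + 1 + (kk+2)*q := by omega
            rw [this]; push_cast; ring
          rw [hfact', hnval, R1', R2']
          push_cast
          linear_combination ((-1:ℚ))^kk * (Nat.factorial mm : ℚ) * (q:ℚ) * R3'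
    · -- vanishing case : n < j*q
      have hc1 : cc q n j = 0 := czero hq (by omega) (by omega)
      have hc2 : (n:ℚ) * cc q (n-1) j = 0 := by
        rcases Nat.eq_zero_or_pos n with rfl | hn
        · norm_num
        · rw [czero hq (by omega) (by omega), mul_zero]
      rw [tD, hc1, hc2]
      have h2 : (if q ≤ n ∧ 1 ≤ j then ((q:ℚ)-2) * cc q (n-q) (j-1) else 0) = 0 := by
        split
        · rename_i hcond
          obtain ⟨p, rfl⟩ : ∃ p, j = p + 2 := by
            refine ⟨j - 2, ?_⟩
            by_contra hx
            have hj1 : j = 1 := by omega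
            subst hj1
            rw [one_mul] at hle
            omega
          have e : (p+2)*q = (p+1)*q + q := by ring
          rw [show p+2-1 = p+1 from rfl, czero hq (by omega) (by omega), mul_zero]
        · rfl
      have h3 : (if q+1 ≤ n ∧ 1 ≤ j then ((n:ℚ)-(q:ℚ)) * cc q (n-q-1) (j-1) else 0) = 0 := by
        split
        · rename_i hcond
          obtain ⟨p, rfl⟩ : ∃ p, j = p + 2 := by
            refine ⟨j - 2, ?_⟩
            by_contra hx
            have hj1 : j = 1 := by omega
            subst hj1
            rw [one_mul] at hle
            omega
          have e : (p+2)*q = (p+1)*q + q := by ring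
          rw [show p+2-1 = p+1 from rfl, czero hq (by omega) (by omega), mul_zero]
        · rfl
      have h4 : (if 2*q ≤ n ∧ 2 ≤ j then ((q:ℚ)-1) * cc q (n-2*q) (j-2) else 0) = 0 := by
        split
        · rename_i hcond
          obtain ⟨p, rfl⟩ : ∃ p, j = p + 3 := by
            refine ⟨j - 3, ?_⟩
            by_contra hx
            have hj1 : j = 2 := by omega
            subst hj1
            omega
          have e : (p+3)*q = (p+1)*q + 2*q := by ring
          rw [show p+3-2 = p+1 from rfl, czero hq (by omega) (by omega), mul_zero]
        · rfl
      rw [h2, h3, h4, if_neg (by omega), if_neg ?_]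
      · ring
      · rintro ⟨rfl, rfl⟩
        rw [one_mul] at hle
        omega
end Perj

section Key
variable {q : ℕ}

theorem sumTA (hq : 1 ≤ q) (n : ℕ) :
    ∑ j ∈ Finset.range (n+1), (n:ℚ) * cc q (n-1) j = (n:ℚ) * (b q (n-1) : ℚ) := by
  rw [← Finset.mul_sum]
  rcases Nat.eq_zero_or_pos n with rfl | hn
  · norm_num
  · rw [← b_closed_ext hq (n-1) (n+1) (by omega)]

theorem sumTB (hq : 1 ≤ q) (n : ℕ) :
    ∑ j ∈ Finset.range (n+1), (if q ≤ n ∧ 1 ≤ j then ((q:ℚ)-2) * cc q (n-q) (j-1) else 0)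
      = (if q ≤ n then ((q:ℚ)-2) * (b q (n-q) : ℚ) else 0) := by
  by_cases hqn : q ≤ n
  · rw [if_pos hqn, Finset.sum_range_succ']
    rw [if_neg (by omega), add_zero]
    have : ∀ i ∈ Finset.range n, (if q ≤ n ∧ 1 ≤ i+1 then ((q:ℚ)-2) * cc q (n-q) (i+1-1) else 0)
        = ((q:ℚ)-2) * cc q (n-q) i := by
      intro i _
      rw [if_pos ⟨hqn, by omega⟩, Nat.add_sub_cancel]
    rw [Finset.sum_congr rfl this, ← Finset.mul_sum,
      ← b_closed_ext hq (n-q) n (by omega)]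
  · rw [if_neg hqn]
    refine Finset.sum_eq_zero fun j _ => ?_
    rw [if_neg (by omega)]

theorem sumTC (hq : 1 ≤ q) (n : ℕ) :
    ∑ j ∈ Finset.range (n+1), (if q+1 ≤ n ∧ 1 ≤ j then ((n:ℚ)-(q:ℚ)) * cc q (n-q-1) (j-1) else 0)
      = (if q+1 ≤ n then ((n:ℚ)-(q:ℚ)) * (b q (n-q-1) : ℚ) else 0) := by
  by_cases hqn : q+1 ≤ n
  · rw [if_pos hqn, Finset.sum_range_succ']
    rw [if_neg (by omega), add_zero]
    have : ∀ i ∈ Finset.range n,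
        (if q+1 ≤ n ∧ 1 ≤ i+1 then ((n:ℚ)-(q:ℚ)) * cc q (n-q-1) (i+1-1) else 0)
        = ((n:ℚ)-(q:ℚ)) * cc q (n-q-1) i := by
      intro i _
      rw [if_pos ⟨hqn, by omega⟩, Nat.add_sub_cancel]
    rw [Finset.sum_congr rfl this, ← Finset.mul_sum,
      ← b_closed_ext hq (n-q-1) n (by omega)]
  · rw [if_neg hqn]
    refine Finset.sum_eq_zero fun j _ => ?_
    rw [if_neg (by omega)]

theorem sumTD (hq : 1 ≤ q) (n : ℕ) :
    ∑ j ∈ Finset.range (n+1), (if 2*q ≤ n ∧ 2 ≤ j then ((q:ℚ)-1) * cc q (n-2*q) (j-2) else 0)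
      = (if 2*q ≤ n then ((q:ℚ)-1) * (b q (n-2*q) : ℚ) else 0) := by
  by_cases hqn : 2*q ≤ n
  · obtain ⟨n', rfl⟩ : ∃ n', n = n' + 1 := ⟨n - 1, by omega⟩
    rw [if_pos hqn, Finset.sum_range_succ']
    rw [if_neg (by omega), add_zero, Finset.sum_range_succ']
    rw [if_neg (by omega), add_zero]
    have : ∀ i ∈ Finset.range n',
        (if 2*q ≤ n'+1 ∧ 2 ≤ i+1+1 then ((q:ℚ)-1) * cc q (n'+1-2*q) (i+1+1-2) else 0)
        = ((q:ℚ)-1) * cc q (n'+1-2*q) i := by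
      intro i _
      rw [if_pos ⟨hqn, by omega⟩, show i+1+1-2 = i from rfl]
    rw [Finset.sum_congr rfl this, ← Finset.mul_sum,
      ← b_closed_ext hq (n'+1-2*q) n' (by omega)]
  · rw [if_neg hqn]
    refine Finset.sum_eq_zero fun j _ => ?_
    rw [if_neg (by omega)]

theorem key (hq : 1 ≤ q) (n : ℕ) :
    (b q n : ℚ) - (n:ℚ) * (b q (n-1) : ℚ)
      - (if q ≤ n then ((q:ℚ)-2) * (b q (n-q) : ℚ) else 0)
      - (if q+1 ≤ n then ((n:ℚ)-(q:ℚ)) * (b q (n-q-1) : ℚ) else 0)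
      - (if 2*q ≤ n then ((q:ℚ)-1) * (b q (n-2*q) : ℚ) else 0)
      = (if n = 0 then 1 else 0) - (if n = q then ((q:ℚ)-1) else 0) := by
  have hsum : ∑ j ∈ Finset.range (n+1), tD q n j
      = (if n = 0 then (1:ℚ) else 0) - (if n = q then ((q:ℚ)-1) else 0) := by
    rw [Finset.sum_congr rfl (fun j _ => perj hq n j), Finset.sum_sub_distrib]
    congr 1
    · by_cases h : n = 0
      · subst h; simp
      · simp [h]
    · by_cases h : n = q
      · subst h
        simp only [true_and, if_pos rfl]
        rw [Finset.sum_ite_eq' (Finset.range (n+1)) 1 (fun _ => (n:ℚ)-1)]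
        rw [if_pos (Finset.mem_range.mpr (Nat.lt_succ_of_le hq)), if_pos trivial]
      · simp [h]
  have hexp : ∑ j ∈ Finset.range (n+1), tD q n j
      = (b q n : ℚ) - (n:ℚ) * (b q (n-1) : ℚ)
      - (if q ≤ n then ((q:ℚ)-2) * (b q (n-q) : ℚ) else 0)
      - (if q+1 ≤ n then ((n:ℚ)-(q:ℚ)) * (b q (n-q-1) : ℚ) else 0)
      - (if 2*q ≤ n then ((q:ℚ)-1) * (b q (n-2*q) : ℚ) else 0) := by
    simp only [tD]
    rw [Finset.sum_sub_distrib, Finset.sum_sub_distrib, Finset.sum_sub_distrib,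
      Finset.sum_sub_distrib]
    rw [sumTA hq n, sumTB hq n, sumTC hq n, sumTD hq n, ← b_closed_q hq n]
  rw [← hexp, hsum]
end Key

open PowerSeries in
theorem stmt11 (q : ℕ) (hq : 1 ≤ q) :
    letI g : PowerSeries ℚ := PowerSeries.mk fun n => (b q n : ℚ)
    X ^ 2 * (1 + X ^ q) * (PowerSeries.derivative ℚ g) -
        (1 + X ^ q) * (1 - X - ((q : PowerSeries ℚ) - 1) * X ^ q) * g +
        1 - ((q : PowerSeries ℚ) - 1) * X ^ q = 0 := by
  set g : PowerSeries ℚ := PowerSeries.mk fun n => (b q n : ℚ) with hgdef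
  set gd : PowerSeries ℚ := PowerSeries.derivative ℚ g with hgd
  have hc : ((q : PowerSeries ℚ) - 1) = PowerSeries.C ((q:ℚ)-1) := by
    rw [map_sub, map_one, map_natCast]
  set c : ℚ := (q:ℚ) - 1 with hcdef
  rw [hc]
  have hexpand : X ^ 2 * (1 + X ^ q) * gd - (1 + X ^ q) * (1 - X - (C c) * X ^ q) * g
        + 1 - (C c) * X ^ q
      = gd * X^2 + gd * X^(q+2)
        - g + g * X - g * X^q + g * X^(q+1) + (C c) * (g * X^q)
        + (C c) * (g * X^(2*q)) + 1 - (C c) * X^q := by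
    rw [pow_add, pow_add, two_mul, pow_add]
    ring
  rw [hexpand]
  refine PowerSeries.ext fun n => ?_
  -- atoms
  set X1 : ℚ := if 1 ≤ n then (b q (n-1) : ℚ) else 0 with hX1
  set Xq : ℚ := if q ≤ n then (b q (n-q) : ℚ) else 0 with hXq
  set Xq1 : ℚ := if q+1 ≤ n then (b q (n-q-1) : ℚ) else 0 with hXq1
  set X2q : ℚ := if 2*q ≤ n then (b q (n-2*q) : ℚ) else 0 with hX2q
  set D0 : ℚ := if n = 0 then (1:ℚ) else 0 with hD0
  set Dq : ℚ := if n = q then (1:ℚ) else 0 with hDq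
  -- coefficients of the pieces
  have hgco : ∀ d, PowerSeries.coeff d g = (b q d : ℚ) := fun d => PowerSeries.coeff_mk d _
  have hgdco : ∀ d, PowerSeries.coeff d gd = (b q (d+1) : ℚ) * (d+1) := by
    intro d
    rw [hgd, PowerSeries.coeff_derivative, hgco]
  have E1 : PowerSeries.coeff n (gd * X^2) = (n:ℚ) * X1 - X1 := by
    rw [PowerSeries.coeff_mul_X_pow']
    by_cases h : 2 ≤ n
    · rw [if_pos h, hgdco, show n-2+1 = n-1 by omega, hX1, if_pos (by omega),
        Nat.cast_sub (by omega : 2 ≤ n)]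
      push_cast
      ring
    · rw [if_neg h, hX1]
      rcases (by omega : n = 0 ∨ n = 1) with rfl | rfl
      · norm_num
      · norm_num
  have E2 : PowerSeries.coeff n (gd * X^(q+2)) = ((n:ℚ) - (q:ℚ)) * Xq1 - Xq1 := by
    rw [PowerSeries.coeff_mul_X_pow']
    by_cases h : q+2 ≤ n
    · rw [if_pos h, hgdco, show n-(q+2)+1 = n-q-1 by omega, hXq1, if_pos (by omega),
        Nat.cast_sub (by omega : q+2 ≤ n)]
      push_cast
      ring
    · rw [if_neg h, hXq1]
      by_cases h2 : q+1 ≤ n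
      · rw [if_pos h2]
        have : n = q + 1 := by omega
        subst this
        rw [show q+1-q-1 = 0 by omega]
        push_cast
        ring
      · rw [if_neg h2]
        ring
  have E3 : PowerSeries.coeff n g = (b q n : ℚ) := hgco n
  have E4 : PowerSeries.coeff n (g * X) = X1 := by
    rw [← pow_one (X : PowerSeries ℚ), PowerSeries.coeff_mul_X_pow', hX1]
    by_cases h : 1 ≤ n
    · rw [if_pos h, if_pos h, hgco]
    · rw [if_neg h, if_neg h]
  have E5 : PowerSeries.coeff n (g * X^q) = Xq := by
    rw [PowerSeries.coeff_mul_X_pow', hXq]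
    by_cases h : q ≤ n
    · rw [if_pos h, if_pos h, hgco]
    · rw [if_neg h, if_neg h]
  have E6 : PowerSeries.coeff n (g * X^(q+1)) = Xq1 := by
    rw [PowerSeries.coeff_mul_X_pow', hXq1]
    by_cases h : q+1 ≤ n
    · rw [if_pos h, if_pos h, hgco, show n-(q+1) = n-q-1 by omega]
    · rw [if_neg h, if_neg h]
  have E7 : PowerSeries.coeff n (C c * (g * X^q)) = c * Xq := by
    rw [PowerSeries.coeff_C_mul, E5]
  have E8 : PowerSeries.coeff n (C c * (g * X^(2*q))) = c * X2q := by
    rw [PowerSeries.coeff_C_mul, PowerSeries.coeff_mul_X_pow', hX2q]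
    by_cases h : 2*q ≤ n
    · rw [if_pos h, if_pos h, hgco]
    · rw [if_neg h, if_neg h, mul_zero]
  have E9 : PowerSeries.coeff n (1 : PowerSeries ℚ) = D0 := PowerSeries.coeff_one n
  have E10 : PowerSeries.coeff n (C c * X^q) = c * Dq := by
    rw [PowerSeries.coeff_C_mul, PowerSeries.coeff_X_pow, hDq]
  -- the recurrence in atom form
  have hkey := key hq n
  have k1 : (n:ℚ) * (b q (n-1) : ℚ) = (n:ℚ) * X1 := by
    rw [hX1]
    by_cases h : 1 ≤ n
    · rw [if_pos h]
    · rw [if_neg h, show n = 0 by omega]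
      push_cast
      ring
  have k2 : (if q ≤ n then ((q:ℚ)-2) * (b q (n-q) : ℚ) else 0) = ((q:ℚ)-2) * Xq := by
    rw [hXq]; split <;> simp
  have k3 : (if q+1 ≤ n then ((n:ℚ)-(q:ℚ)) * (b q (n-q-1) : ℚ) else 0)
      = ((n:ℚ)-(q:ℚ)) * Xq1 := by
    rw [hXq1]; split <;> simp
  have k4 : (if 2*q ≤ n then ((q:ℚ)-1) * (b q (n-2*q) : ℚ) else 0) = ((q:ℚ)-1) * X2q := by
    rw [hX2q]; split <;> simp
  have k5 : (if n = 0 then (1:ℚ) else 0) = D0 := rfl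
  have k6 : (if n = q then ((q:ℚ)-1) else 0) = ((q:ℚ)-1) * Dq := by
    rw [hDq]; split <;> simp
  rw [k1, k2, k3, k4, k5, k6] at hkey
  -- assemble
  simp only [map_sub, map_add, E1, E2, E3, E4, E5, E6, E7, E8, E9, E10, map_zero]
  rw [hcdef]
  linear_combination -hkey
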